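/- Let f : ℍ → ℍ be a hyperbolic holomorphic self-map of the right half-plane with Denjoy–Wolff point ∞. Fix w ∈ ℍ and let γ : [0,∞) → ℍ be the hyperbolic geodesic γ(t) = w + t emanating from w and landing at ∞. For z ∈ ℍ, let π_n denote the (unique, for large n) projection of f^n(z) onto γ. Then the sequence {d_ℍ(w, π_n)} is eventually strictly increasing. -/

import Mathlib

open Complex Filter Topology

/-- Pseudo-hyperbolic distance on the right half-plane ℍ = {Re z > 0}. -/
noncomputable def rhoH (z w : ℂ) : ℝ := ‖(z - w) / (z + (starRingEnd ℂ) w)‖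

/-- Hyperbolic distance on the right half-plane. -/
noncomputable def dH (z w : ℂ) : ℝ := (1/2) * Real.log ((1 + rhoH z w) / (1 - rhoH z w))

/-- `p` is a hyperbolic projection of `z` onto the curve `γ : [0,∞) → ℍ`. -/
def IsProjH (γ : ℝ → ℂ) (z p : ℂ) : Prop :=
  (∃ t ≥ (0:ℝ), p = γ t) ∧ ∀ t ≥ (0:ℝ), dH z p ≤ dH z (γ t)

/-- `f` is a hyperbolic holomorphic self-map of the right half-plane with
Denjoy–Wolff point ∞: it preserves ℍ, is holomorphic on ℍ, its iterates tend to ∞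
uniformly on compact subsets of ℍ, and `f(z)/z → c` for some `c > 1` as `z → ∞`
within every sector `{|arg z| < φ}`, `φ ∈ (0, π/2)`. -/
def HyperbolicAtInf (f : ℂ → ℂ) : Prop :=
  (∀ z : ℂ, 0 < z.re → 0 < (f z).re) ∧
  DifferentiableOn ℂ f {z : ℂ | 0 < z.re} ∧
  (∀ K : Set ℂ, K ⊆ {z : ℂ | 0 < z.re} → IsCompact K →
    ∀ M : ℝ, ∃ N : ℕ, ∀ n ≥ N, ∀ z ∈ K, M < ‖f^[n] z‖) ∧
  (∃ c : ℝ, 1 < c ∧ ∀ φ ∈ Set.Ioo (0:ℝ) (Real.pi/2), ∀ ε > (0:ℝ), ∃ R : ℝ,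
    ∀ z : ℂ, 0 < z.re → |z.arg| < φ → R < ‖z‖ →
      ‖f z / z - (c:ℂ)‖ < ε)

lemma re_add_conj {z a : ℂ} : (z + (starRingEnd ℂ) a).re = z.re + a.re := by
  simp


lemma add_conj_ne_zero {z a : ℂ} (hz : 0 < z.re) (ha : 0 < a.re) :
    z + (starRingEnd ℂ) a ≠ 0 := by
  intro h
  have : (z + (starRingEnd ℂ) a).re = 0 := by rw [h]; simp
  rw [re_add_conj] at this; linarith


lemma rhoH_nonneg (z a : ℂ) : 0 ≤ rhoH z a := by
  unfold rhoH; positivity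


lemma abs_sub_lt_abs_add_conj {z a : ℂ} (hz : 0 < z.re) (ha : 0 < a.re) :
    ‖z - a‖ < ‖z + (starRingEnd ℂ) a‖ := by
  rw [Complex.norm_def, Complex.norm_def]
  apply Real.sqrt_lt_sqrt (Complex.normSq_nonneg _)
  simp only [Complex.normSq_apply, Complex.add_re, Complex.add_im, Complex.sub_re,
    Complex.sub_im, Complex.conj_re, Complex.conj_im]
  nlinarith [mul_pos hz ha]


lemma rhoH_lt_one {z a : ℂ} (hz : 0 < z.re) (ha : 0 < a.re) : rhoH z a < 1 := by
  unfold rhoH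
  rw [norm_div]
  rw [div_lt_one (by
    have := add_conj_ne_zero hz ha
    exact norm_pos_iff.mpr this)]
  exact abs_sub_lt_abs_add_conj hz ha


lemma dH_lt_dH {z a b : ℂ} (h0 : 0 ≤ rhoH z a) (h1 : rhoH z a < rhoH z b)
    (h2 : rhoH z b < 1) : dH z a < dH z b := by
  unfold dH
  have e1 : 0 < 1 - rhoH z b := by linarith
  have e2 : 0 < 1 - rhoH z a := by linarith
  have key : (1 + rhoH z a) / (1 - rhoH z a) < (1 + rhoH z b) / (1 - rhoH z b) := by
    rw [div_lt_div_iff₀ e2 e1]; nlinarith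
  have hp : 0 < (1 + rhoH z a) / (1 - rhoH z a) := by positivity
  have := Real.log_lt_log hp key
  linarith


open Metric in
lemma schwarz_pick (f : ℂ → ℂ) (h1 : ∀ z : ℂ, 0 < z.re → 0 < (f z).re)
    (h2 : DifferentiableOn ℂ f {z : ℂ | 0 < z.re}) {z w : ℂ}
    (hz : 0 < z.re) (hw : 0 < w.re) : rhoH (f z) (f w) ≤ rhoH z w := by
  set T : ℂ → ℂ := fun ξ => (w + (starRingEnd ℂ) w * ξ) / (1 - ξ) with hT
  set g : ℂ → ℂ := fun ξ => (f (T ξ) - f w) / (f (T ξ) + (starRingEnd ℂ) (f w)) with hg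
  -- T maps the unit ball into the right half-plane
  have hTre : ∀ ξ ∈ ball (0:ℂ) 1, 0 < (T ξ).re := by
    intro ξ hξ
    have hξ1 : ‖ξ‖ < 1 := by simpa [Complex.norm_def] using mem_ball_zero_iff.mp hξ
    have hns : Complex.normSq ξ < 1 := by
      have := Complex.sq_norm ξ
      nlinarith [norm_nonneg ξ]
    have hd : (1 : ℂ) - ξ ≠ 0 := by
      intro h
      have : ξ = 1 := by linear_combination -h
      rw [this] at hξ1; simp at hξ1
    rw [hT]
    simp only []
    rw [Complex.div_re]
    have hnum : (w + (starRingEnd ℂ) w * ξ).re * (1 - ξ).re +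
        (w + (starRingEnd ℂ) w * ξ).im * (1 - ξ).im = w.re * (1 - Complex.normSq ξ) := by
      simp [Complex.normSq_apply, Complex.add_re, Complex.add_im, Complex.mul_re,
        Complex.mul_im, Complex.sub_re, Complex.sub_im, Complex.conj_re, Complex.conj_im]
      ring
    have hden : 0 < Complex.normSq (1 - ξ) := Complex.normSq_pos.mpr hd
    have : 0 < w.re * (1 - Complex.normSq ξ) := by nlinarith
    rw [← add_div, hnum]
    exact div_pos this hden
  have hden1 : ∀ ξ ∈ ball (0:ℂ) 1, (1:ℂ) - ξ ≠ 0 := by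
    intro ξ hξ h
    have hξ1 : ‖ξ‖ < 1 := by simpa [Complex.norm_def] using mem_ball_zero_iff.mp hξ
    have : ξ = 1 := by linear_combination -h
    rw [this] at hξ1; simp at hξ1
  have hTdiff : DifferentiableOn ℂ T (ball (0:ℂ) 1) := by
    apply DifferentiableOn.div
    · exact (differentiableOn_const _).add ((differentiableOn_const _).mul differentiableOn_id)
    · exact (differentiableOn_const _).sub differentiableOn_id
    · exact hden1
  have hfT : ∀ ξ ∈ ball (0:ℂ) 1, 0 < (f (T ξ)).re := fun ξ hξ => h1 _ (hTre ξ hξ)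
  have hgdiff : DifferentiableOn ℂ g (ball (0:ℂ) 1) := by
    have hfTdiff : DifferentiableOn ℂ (fun ξ => f (T ξ)) (ball (0:ℂ) 1) :=
      h2.comp hTdiff fun ξ hξ => hTre ξ hξ
    apply DifferentiableOn.div
    · exact hfTdiff.sub (differentiableOn_const _)
    · exact hfTdiff.add (differentiableOn_const _)
    · intro ξ hξ; exact add_conj_ne_zero (hfT ξ hξ) (h1 w hw)
  have hgmaps : Set.MapsTo g (ball (0:ℂ) 1) (ball (0:ℂ) 1) := by
    intro ξ hξ
    rw [mem_ball_zero_iff]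
    have h' := rhoH_lt_one (hfT ξ hξ) (h1 w hw)
    simpa [rhoH, hg] using h'
  have hg0 : g 0 = 0 := by
    have hT0 : T 0 = w := by
      rw [hT]; simp
    simp [hg, hT0]
  have hξ0 : ‖(z - w) / (z + (starRingEnd ℂ) w)‖ < 1 := by
    have := rhoH_lt_one hz hw; simpa [rhoH] using this
  have hzw : z + (starRingEnd ℂ) w ≠ 0 := add_conj_ne_zero hz hw
  have hww : (w + (starRingEnd ℂ) w) ≠ 0 := add_conj_ne_zero hw hw
  have hone : (1:ℂ) - (z - w) / (z + (starRingEnd ℂ) w) ≠ 0 := by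
    have : (1:ℂ) - (z - w) / (z + (starRingEnd ℂ) w)
        = (w + (starRingEnd ℂ) w) / (z + (starRingEnd ℂ) w) := by
      field_simp
      ring
    rw [this]
    exact div_ne_zero hww hzw
  have hTz : T ((z - w) / (z + (starRingEnd ℂ) w)) = z := by
    rw [hT]
    field_simp
    rw [div_eq_iff (show z + (starRingEnd ℂ) w - (z - w) ≠ 0 by
      rw [show z + (starRingEnd ℂ) w - (z - w) = w + (starRingEnd ℂ) w by ring]; exact hww)]
    ring
  have key := Complex.norm_le_norm_of_mapsTo_ball hgdiff (hgmaps.mono_right ball_subset_closedBall) hg0 hξ0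
  have hgval : g ((z - w) / (z + (starRingEnd ℂ) w))
      = (f z - f w) / (f z + (starRingEnd ℂ) (f w)) := by
    rw [hg]
    simp only []
    rw [hTz]
  unfold rhoH
  rw [← hgval]
  exact key

lemma tendsto_real_div (f : ℂ → ℂ) (c : ℝ)
    (hsec : ∀ φ ∈ Set.Ioo (0:ℝ) (Real.pi/2), ∀ ε > (0:ℝ), ∃ R : ℝ,
      ∀ z : ℂ, 0 < z.re → |z.arg| < φ → R < ‖z‖ →
        ‖f z / z - (c:ℂ)‖ < ε) :
    Tendsto (fun x : ℝ => f x / x) atTop (𝓝 (c:ℂ)) := by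
  rw [Metric.tendsto_atTop]
  intro ε hε
  have hπ := Real.pi_pos
  obtain ⟨R, hR⟩ := hsec (Real.pi/4) ⟨by linarith, by linarith⟩ ε hε
  refine ⟨max R 0 + 1, fun x hx => ?_⟩
  have hx0 : 0 < x := lt_of_lt_of_le (by positivity) hx
  have hxR : R < x := by
    have : R ≤ max R 0 := le_max_left _ _
    linarith
  have h1 : 0 < ((x:ℂ)).re := by simpa using hx0
  have h2 : |Complex.arg (x:ℂ)| < Real.pi/4 := by
    rw [Complex.arg_ofReal_of_nonneg hx0.le]
    simpa using by linarith
  have h3 : R < ‖(x:ℂ)‖ := by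
    rwa [Complex.norm_real, Real.norm_eq_abs, abs_of_pos hx0]
  rw [Complex.dist_eq]
  exact hR _ h1 h2 h3


lemma julia (f : ℂ → ℂ) (c : ℝ) (h1 : ∀ z : ℂ, 0 < z.re → 0 < (f z).re)
    (h2 : DifferentiableOn ℂ f {z : ℂ | 0 < z.re})
    (htend : Tendsto (fun x : ℝ => f x / x) atTop (𝓝 (c:ℂ)))
    {ζ : ℂ} (hζ : 0 < ζ.re) : c * ζ.re ≤ (f ζ).re := by
  have hA := h1 ζ hζ
  have key : ∀ᶠ x : ℝ in atTop,
      ζ.re * (x * (f x).re / (Complex.normSq ζ + x^2)) ≤ (f ζ).re := by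
    filter_upwards [eventually_gt_atTop (0:ℝ)] with x hx
    have hxre : 0 < ((x:ℂ)).re := by simpa using hx
    have hsp := schwarz_pick f h1 h2 hζ hxre
    have hB := h1 _ hxre
    have d1 : 0 < ‖ζ + (starRingEnd ℂ) (x:ℂ)‖ :=
      norm_pos_iff.mpr (add_conj_ne_zero hζ hxre)
    have d2 : 0 < ‖f ζ + (starRingEnd ℂ) (f x)‖ :=
      norm_pos_iff.mpr (add_conj_ne_zero hA hB)
    rw [rhoH, rhoH, norm_div, norm_div, div_le_div_iff₀ d2 d1] at hsp
    have hsq : Complex.normSq (f ζ - f x) * Complex.normSq (ζ + (starRingEnd ℂ) (x:ℂ)) ≤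
        Complex.normSq (ζ - (x:ℂ)) * Complex.normSq (f ζ + (starRingEnd ℂ) (f x)) := by
      have h2' := mul_le_mul hsp hsp (by positivity) (by positivity)
      calc Complex.normSq (f ζ - f x) * Complex.normSq (ζ + (starRingEnd ℂ) (x:ℂ))
          = (‖f ζ - f x‖ * ‖ζ + (starRingEnd ℂ) (x:ℂ)‖) *
            (‖f ζ - f x‖ * ‖ζ + (starRingEnd ℂ) (x:ℂ)‖) := by
            rw [← Complex.sq_norm, ← Complex.sq_norm]; ring
        _ ≤ (‖ζ - (x:ℂ)‖ * ‖f ζ + (starRingEnd ℂ) (f x)‖) *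
            (‖ζ - (x:ℂ)‖ * ‖f ζ + (starRingEnd ℂ) (f x)‖) := h2'
        _ = Complex.normSq (ζ - (x:ℂ)) * Complex.normSq (f ζ + (starRingEnd ℂ) (f x)) := by
            rw [← Complex.sq_norm, ← Complex.sq_norm]; ring
    have hD : (0:ℝ) < Complex.normSq ζ + x^2 := by
      have := Complex.normSq_nonneg ζ; nlinarith
    rw [← mul_div_assoc, div_le_iff₀ hD]
    simp only [Complex.normSq_apply, Complex.sub_re, Complex.sub_im, Complex.add_re,
      Complex.add_im, Complex.conj_re, Complex.conj_im, Complex.ofReal_re,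
      Complex.ofReal_im] at hsq ⊢
    nlinarith [hsq, mul_pos hx hζ, hB, hA,
      mul_nonneg (mul_pos hx hζ).le (add_nonneg (sq_nonneg (f ζ).re)
        (sq_nonneg ((f ζ).im - (f x).im)))]
  have hre : Tendsto (fun x : ℝ => ((f x / x : ℂ)).re) atTop (𝓝 c) := by
    have h := (Complex.continuous_re.tendsto (c:ℂ)).comp htend
    simp only [Complex.ofReal_re] at h
    exact h
  have hfrac : Tendsto (fun x : ℝ => x^2 / (Complex.normSq ζ + x^2)) atTop (𝓝 1) := by
    have hd : Tendsto (fun x : ℝ => Complex.normSq ζ / (Complex.normSq ζ + x^2)) atTop (𝓝 0) :=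
      Tendsto.div_atTop tendsto_const_nhds
        (tendsto_atTop_add_const_left _ _ (tendsto_pow_atTop two_ne_zero))
    have heq : ∀ᶠ x : ℝ in atTop, 1 - Complex.normSq ζ / (Complex.normSq ζ + x^2)
        = x^2 / (Complex.normSq ζ + x^2) := by
      filter_upwards [eventually_gt_atTop (0:ℝ)] with x hx
      have hD : (0:ℝ) < Complex.normSq ζ + x^2 := by
        have := Complex.normSq_nonneg ζ; nlinarith
      field_simp
      ring
    have := (tendsto_const_nhds.sub hd).congr' heq
    simpa using this
  have hlim : Tendsto (fun x : ℝ => ζ.re * (x * (f x).re / (Complex.normSq ζ + x^2)))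
      atTop (𝓝 (ζ.re * c)) := by
    have hcomb := (tendsto_const_nhds : Tendsto (fun _ : ℝ => ζ.re) atTop (𝓝 ζ.re)).mul
      (hre.mul hfrac)
    rw [mul_one] at hcomb
    apply hcomb.congr'
    filter_upwards [eventually_gt_atTop (0:ℝ)] with x hx
    have hx' : (x:ℂ) ≠ 0 := by exact_mod_cast hx.ne'
    have hD : (0:ℝ) < Complex.normSq ζ + x^2 := by
      have := Complex.normSq_nonneg ζ; nlinarith
    have hdre : ((f x / x : ℂ)).re = (f x).re / x := by
      rw [Complex.div_re]
      simp [Complex.normSq_ofReal]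
      field_simp
    rw [hdre]
    field_simp
  have := le_of_tendsto hlim key
  linarith [this]


lemma iter_re_pos (f : ℂ → ℂ) (h1 : ∀ z : ℂ, 0 < z.re → 0 < (f z).re) :
    ∀ (n : ℕ) (a : ℂ), 0 < a.re → 0 < (f^[n] a).re := by
  intro n
  induction n with
  | zero => intro a ha; simpa using ha
  | succ n ih =>
    intro a ha
    rw [Function.iterate_succ_apply']
    exact h1 _ (ih a ha)


lemma schwarz_pick_iter (f : ℂ → ℂ) (h1 : ∀ z : ℂ, 0 < z.re → 0 < (f z).re)
    (h2 : DifferentiableOn ℂ f {z : ℂ | 0 < z.re}) :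
    ∀ (n : ℕ) (a b : ℂ), 0 < a.re → 0 < b.re →
      rhoH (f^[n] a) (f^[n] b) ≤ rhoH a b := by
  intro n
  induction n with
  | zero => intro a b _ _; simp
  | succ n ih =>
    intro a b ha hb
    rw [Function.iterate_succ_apply', Function.iterate_succ_apply']
    exact le_trans (schwarz_pick f h1 h2 (iter_re_pos f h1 n a ha) (iter_re_pos f h1 n b hb))
      (ih a b ha hb)


lemma im_step {a b : ℂ} (ha : 0 < a.re) (hb : 0 < b.re) {k : ℝ}
    (hk : rhoH a b ≤ k) (hk1 : k < 1) :
    |a.im - b.im| ≤ (k / Real.sqrt (1 - k^2)) * (a.re + b.re) := by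
  have hk0 : 0 ≤ k := le_trans (rhoH_nonneg a b) hk
  have h1k : 0 < 1 - k^2 := by nlinarith
  have hs : 0 < Real.sqrt (1 - k^2) := Real.sqrt_pos.mpr h1k
  have hsq : Real.sqrt (1 - k^2)^2 = 1 - k^2 := Real.sq_sqrt h1k.le
  set K := k / Real.sqrt (1 - k^2) with hKdef
  have hK0 : 0 ≤ K := by positivity
  have hK2 : K^2 * (1 - k^2) = k^2 := by
    rw [hKdef, div_pow, hsq]
    field_simp
  have d1 : 0 < ‖a + (starRingEnd ℂ) b‖ :=
    norm_pos_iff.mpr (add_conj_ne_zero ha hb)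
  have habs : ‖a - b‖ ≤ k * ‖a + (starRingEnd ℂ) b‖ := by
    have := hk
    rw [rhoH, norm_div, div_le_iff₀ d1] at this
    exact this
  have hns : Complex.normSq (a - b) ≤ k^2 * Complex.normSq (a + (starRingEnd ℂ) b) := by
    have h2' := mul_le_mul habs habs (norm_nonneg _) (by positivity)
    calc Complex.normSq (a - b) = ‖a-b‖ * ‖a-b‖ := by
          rw [← Complex.sq_norm]; ring
      _ ≤ (k * ‖a + (starRingEnd ℂ) b‖) * (k * ‖a + (starRingEnd ℂ) b‖) := h2'
      _ = k^2 * Complex.normSq (a + (starRingEnd ℂ) b) := by rw [← Complex.sq_norm]; ring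
  simp only [Complex.normSq_apply, Complex.sub_re, Complex.sub_im, Complex.add_re,
    Complex.add_im, Complex.conj_re, Complex.conj_im] at hns
  have hΔ : (a.im - b.im)^2 ≤ (K * (a.re + b.re))^2 := by
    rw [mul_pow]
    nlinarith [hns, hK2, sq_nonneg (a.im - b.im), sq_nonneg (a.re + b.re), h1k,
      sq_nonneg K, mul_nonneg (sq_nonneg K) (sq_nonneg (a.re - b.re))]
  calc |a.im - b.im| = Real.sqrt ((a.im - b.im)^2) := (Real.sqrt_sq_eq_abs _).symm
    _ ≤ Real.sqrt ((K * (a.re + b.re))^2) := Real.sqrt_le_sqrt hΔ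
    _ = K * (a.re + b.re) := Real.sqrt_sq (by positivity)


lemma arg_lt_arccos {ζ : ℂ} (hζ : 0 < ζ.re) {s : ℝ} (hs : 0 ≤ s)
    (him : |ζ.im| ≤ s * ζ.re) :
    |ζ.arg| < Real.arccos (1 / (2 * Real.sqrt (1 + s^2))) := by
  have hζ0 : ζ ≠ 0 := fun h => by simp [h] at hζ
  have habs0 : 0 < ‖ζ‖ := norm_pos_iff.mpr hζ0
  have hsq : 0 < Real.sqrt (1 + s^2) := Real.sqrt_pos.mpr (by positivity)
  have hs1 : 1 ≤ Real.sqrt (1 + s^2) := by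
    nlinarith [Real.sq_sqrt (show (0:ℝ) ≤ 1 + s^2 by positivity), Real.sqrt_nonneg (1 + s^2)]
  have habs_le : ‖ζ‖ ≤ Real.sqrt (1 + s^2) * ζ.re := by
    rw [Complex.norm_def, Complex.normSq_apply]
    have h1 : ζ.re * ζ.re + ζ.im * ζ.im ≤ (1 + s^2) * ζ.re^2 := by
      have := abs_le.mp him
      nlinarith [_root_.sq_abs ζ.im, him, abs_nonneg ζ.im]
    calc Real.sqrt (ζ.re * ζ.re + ζ.im * ζ.im) ≤ Real.sqrt ((1 + s^2) * ζ.re^2) :=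
          Real.sqrt_le_sqrt h1
      _ = Real.sqrt (1 + s^2) * ζ.re := by
          rw [Real.sqrt_mul (by positivity), Real.sqrt_sq hζ.le]
  have hcos : Real.cos |ζ.arg| = ζ.re / ‖ζ‖ := by
    rw [Real.cos_abs, Complex.cos_arg hζ0]
  have hgt : 1 / (2 * Real.sqrt (1 + s^2)) < ζ.re / ‖ζ‖ := by
    have h1 : ζ.re / ‖ζ‖ ≥ 1 / Real.sqrt (1 + s^2) := by
      rw [ge_iff_le, div_le_div_iff₀ hsq habs0]
      nlinarith [habs_le]
    have h2 : 1 / (2 * Real.sqrt (1 + s^2)) < 1 / Real.sqrt (1 + s^2) := by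
      apply div_lt_div_of_pos_left one_pos hsq
      linarith
    linarith
  -- conclude via strict antitonicity of cos on [0, π]
  have hmem1 : |ζ.arg| ∈ Set.Icc (0:ℝ) Real.pi :=
    ⟨abs_nonneg _, Complex.abs_arg_le_pi ζ⟩
  have hmem2 : Real.arccos (1 / (2 * Real.sqrt (1 + s^2))) ∈ Set.Icc (0:ℝ) Real.pi :=
    ⟨Real.arccos_nonneg _, Real.arccos_le_pi _⟩
  by_contra hcon
  push_neg at hcon
  have hle : Real.cos |ζ.arg| ≤ Real.cos (Real.arccos (1 / (2 * Real.sqrt (1 + s^2)))) := by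
    apply Real.strictAntiOn_cos.le_iff_ge hmem1 hmem2 |>.mpr hcon
  have hxle : 1 / (2 * Real.sqrt (1 + s^2)) ≤ 1 := by
    rw [div_le_one (by positivity)]; linarith
  rw [Real.cos_arccos (le_trans (by norm_num : (-1:ℝ) ≤ 0) (by positivity)) hxle, hcos] at hle
  linarith

lemma dH_ray_eval {w : ℂ} (hw : 0 < w.re) {t : ℝ} (ht : 0 ≤ t) :
    dH w (w + t) = (1/2) * Real.log ((w.re + t)/w.re) := by
  unfold dH rhoH
  have h1 : w - (w + (t:ℂ)) = -(t:ℂ) := by ring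
  have h2 : w + (starRingEnd ℂ) (w + (t:ℂ)) = ((2*w.re + t : ℝ) : ℂ) := by
    rw [map_add, Complex.conj_ofReal, ← add_assoc, Complex.add_conj]
    push_cast
    ring
  rw [h1, h2, norm_div, norm_neg, Complex.norm_real, Real.norm_eq_abs, Complex.norm_real, Real.norm_eq_abs,
    _root_.abs_of_nonneg ht, _root_.abs_of_pos (by linarith)]
  congr 1
  have hd : (0:ℝ) < 2*w.re + t := by linarith
  have h3 : 1 + t/(2*w.re+t) = (2*w.re+2*t)/(2*w.re+t) := by field_simp; ring
  have h4 : 1 - t/(2*w.re+t) = (2*w.re)/(2*w.re+t) := by field_simp; ring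
  rw [h3, h4]
  rw [div_div_div_cancel_right₀]
  · congr 1
    ring
  · exact hd.ne'


lemma key_compare {a : ℂ} (ha : 0 < a.re) {s : ℝ} (hs : 0 < s)
    (hr : s ≠ ‖a‖) :
    ‖(a - (‖a‖ : ℝ))/(a + (‖a‖ : ℝ))‖ <
      ‖(a - s)/(a + s)‖ := by
  set r : ℝ := ‖a‖ with hrdef
  have ha0 : a ≠ 0 := fun h => by simp [h] at ha
  have hrpos : 0 < r := norm_pos_iff.mpr ha0
  have hr2 : a.re^2 + a.im^2 = r^2 := by
    rw [hrdef, Complex.sq_norm, Complex.normSq_apply]; ring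
  have hrre : a.re ≤ r := by nlinarith [Complex.abs_re_le_norm a, le_abs_self a.re]
  have hd1 : (0:ℝ) < (a + (r:ℂ)).re := by
    simp only [Complex.add_re, Complex.ofReal_re]
    linarith
  have hd2 : (0:ℝ) < (a + (s:ℂ)).re := by
    simp only [Complex.add_re, Complex.ofReal_re]
    linarith
  have hd1' : a + (r:ℂ) ≠ 0 := fun h => by rw [h] at hd1; simp at hd1
  have hd2' : a + (s:ℂ) ≠ 0 := fun h => by rw [h] at hd2; simp at hd2
  rw [norm_div, norm_div, div_lt_div_iff₀ (norm_pos_iff.mpr hd1') (norm_pos_iff.mpr hd2')]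
  have hns : Complex.normSq (a - (r:ℂ)) * Complex.normSq (a + (s:ℂ)) <
      Complex.normSq (a - (s:ℂ)) * Complex.normSq (a + (r:ℂ)) := by
    simp only [Complex.normSq_apply, Complex.sub_re, Complex.sub_im, Complex.add_re,
      Complex.add_im, Complex.ofReal_re, Complex.ofReal_im]
    have hsr : 0 < (s - r)^2 := sq_pos_of_ne_zero (sub_ne_zero.mpr hr)
    nlinarith [mul_pos (mul_pos ha hrpos) hsr, hr2, hrpos, hs]
  calc ‖a - (r:ℂ)‖ * ‖a + (s:ℂ)‖
      = Real.sqrt (Complex.normSq (a - (r:ℂ)) * Complex.normSq (a + (s:ℂ))) := by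
        rw [Real.sqrt_mul (Complex.normSq_nonneg _), Complex.norm_def, Complex.norm_def]
    _ < Real.sqrt (Complex.normSq (a - (s:ℂ)) * Complex.normSq (a + (r:ℂ))) :=
        Real.sqrt_lt_sqrt (mul_nonneg (Complex.normSq_nonneg _) (Complex.normSq_nonneg _)) hns
    _ = ‖a - (s:ℂ)‖ * ‖a + (r:ℂ)‖ := by
        rw [Real.sqrt_mul (Complex.normSq_nonneg _), Complex.norm_def, Complex.norm_def]


lemma rhoH_ray_eq {w ζ : ℂ} {t : ℝ} :
    rhoH ζ (w + t) = ‖((ζ - w.im*Complex.I) - ((w.re + t : ℝ):ℂ)) /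
      ((ζ - w.im*Complex.I) + ((w.re + t : ℝ):ℂ))‖ := by
  have hw' : (starRingEnd ℂ) w = (w.re:ℂ) - w.im*Complex.I := by
    apply Complex.ext <;> simp
  unfold rhoH
  congr 1
  have e1 : ζ - (w + (t:ℂ)) = (ζ - w.im*Complex.I) - ((w.re + t : ℝ):ℂ) := by
    nth_rewrite 1 [← Complex.re_add_im w]
    push_cast
    ring
  have e2 : ζ + (starRingEnd ℂ) (w + (t:ℂ)) = (ζ - w.im*Complex.I) + ((w.re + t : ℝ):ℂ) := by
    rw [map_add, hw', Complex.conj_ofReal]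
    push_cast
    ring
  rw [e1, e2]


lemma proj_val {w ζ pp : ℂ} (hw : 0 < w.re) (hζ : 0 < ζ.re)
    (hr : w.re < ‖ζ - w.im*Complex.I‖)
    (hproj : IsProjH (fun t : ℝ => w + t) ζ pp) :
    dH w pp = (1/2) * Real.log (‖ζ - w.im*Complex.I‖/w.re) := by
  obtain ⟨⟨t, ht0, hpt⟩, hmin⟩ := hproj
  set a : ℂ := ζ - w.im*Complex.I with hadef
  set r : ℝ := ‖a‖ with hrdef
  have hare : a.re = ζ.re := by simp [hadef]
  have hapos : 0 < a.re := by rw [hare]; exact hζ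
  have htr : w.re + t = r := by
    by_contra hne
    have htstar0 : (0:ℝ) ≤ r - w.re := by linarith
    have hkey := key_compare hapos (show 0 < w.re + t by linarith) hne
    -- rhoH ζ (w + (r - w.re)) < rhoH ζ (w + t)
    have e1 : rhoH ζ (w + ((r - w.re : ℝ):ℂ)) = ‖(a - (r:ℝ))/(a + (r:ℝ))‖ := by
      rw [rhoH_ray_eq]
      norm_num
      rw [hadef]
    have e2 : rhoH ζ (w + ((t : ℝ):ℂ)) = ‖(a - ((w.re + t:ℝ):ℂ))/(a + ((w.re + t:ℝ):ℂ))‖ :=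
      rhoH_ray_eq
    have hlt : rhoH ζ (w + ((r - w.re : ℝ):ℂ)) < rhoH ζ (w + ((t : ℝ):ℂ)) := by
      rw [e1, e2]
      exact hkey
    have hlt1 : rhoH ζ (w + ((t : ℝ):ℂ)) < 1 := by
      apply rhoH_lt_one hζ
      simp only [Complex.add_re, Complex.ofReal_re]
      linarith
    have hdlt : dH ζ (w + ((r - w.re : ℝ):ℂ)) < dH ζ (w + ((t : ℝ):ℂ)) :=
      dH_lt_dH (rhoH_nonneg _ _) hlt hlt1
    have hthis := hmin (r - w.re) htstar0
    rw [hpt] at hthis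
    simp only [] at hthis hdlt
    linarith
  rw [hpt]
  simp only []
  rw [dH_ray_eval hw ht0, htr]

/-- projections of a hyperbolic orbit onto the horizontal geodesic
γ(t) = w + t emanating from w give an eventually strictly increasing orthogonal speed. -/
theorem stmt9 (f : ℂ → ℂ) (hf : HyperbolicAtInf f)
    (w : ℂ) (hw : 0 < w.re) (z : ℂ) (hz : 0 < z.re)
    (p : ℕ → ℂ) (hp : ∀ n : ℕ, IsProjH (fun t : ℝ => w + (t : ℂ)) (f^[n] z) (p n)) :
    ∃ N : ℕ, ∀ n ≥ N, dH w (p n) < dH w (p (n+1)) := by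
  obtain ⟨h1, h2, hesc, c, hc, hsec⟩ := hf
  have hc1 : (0:ℝ) < c - 1 := by linarith
  set ζ : ℕ → ℂ := fun n => f^[n] z with hζdef
  have hRe : ∀ n, 0 < (ζ n).re := fun n => iter_re_pos f h1 n z hz
  have htend := tendsto_real_div f c hsec
  have hjulia : ∀ ξ : ℂ, 0 < ξ.re → c * ξ.re ≤ (f ξ).re :=
    fun ξ hξ => julia f c h1 h2 htend hξ
  have hζsucc : ∀ n, ζ (n+1) = f (ζ n) := fun n => Function.iterate_succ_apply' f n z
  have hstep_re : ∀ n, c * (ζ n).re ≤ (ζ (n+1)).re := by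
    intro n
    rw [hζsucc n]
    exact hjulia _ (hRe n)
  set k : ℝ := rhoH (f z) z with hkdef
  have hfz : 0 < (f z).re := h1 z hz
  have hk1 : k < 1 := rhoH_lt_one hfz hz
  have hk0 : 0 ≤ k := rhoH_nonneg _ _
  set K : ℝ := k / Real.sqrt (1 - k^2) with hKdef
  have hK0 : 0 ≤ K := by
    have h1k : 0 < 1 - k^2 := by nlinarith
    positivity
  have hstep_rho : ∀ n, rhoH (ζ (n+1)) (ζ n) ≤ k := by
    intro n
    have h := schwarz_pick_iter f h1 h2 n (f z) z hfz hz
    have e : ζ (n+1) = f^[n] (f z) := by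
      show f^[n+1] z = f^[n] (f z)
      rw [Function.iterate_succ_apply]
    rw [e]
    exact h
  have hstep_im : ∀ n, |(ζ (n+1)).im - (ζ n).im| ≤ K * ((ζ (n+1)).re + (ζ n).re) :=
    fun n => im_step (hRe (n+1)) (hRe n) (hstep_rho n) hk1
  set B : ℝ := K * (c+1) / (c-1) with hBdef
  have hBc : B * (c-1) = K * (c+1) := by
    rw [hBdef]; field_simp
  have hB0 : 0 ≤ B := by positivity
  have hBK : K ≤ B := by nlinarith [hBc]
  have him : ∀ n, |(ζ n).im - z.im| ≤ B * (ζ n).re := by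
    intro n
    induction n with
    | zero =>
      have h0 : ζ 0 = z := rfl
      rw [h0]
      simp only [sub_self, abs_zero]
      positivity
    | succ n ih =>
      have htri : |(ζ (n+1)).im - z.im| ≤ |(ζ (n+1)).im - (ζ n).im| + |(ζ n).im - z.im| :=
        abs_sub_le _ _ _
      have h6 : (B - K) * c = B + K := by linear_combination hBc
      have h7 : (B + K) * (ζ n).re ≤ (B - K) * (ζ (n+1)).re := by
        calc (B + K) * (ζ n).re = ((B - K) * c) * (ζ n).re := by rw [h6]
          _ = (B - K) * (c * (ζ n).re) := by ring
          _ ≤ (B - K) * (ζ (n+1)).re :=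
              mul_le_mul_of_nonneg_left (hstep_re n) (by linarith)
      have := hstep_im n
      linarith
  set s : ℝ := B + 1 with hsdef
  have hs0 : (0:ℝ) ≤ s := by linarith
  set φ : ℝ := Real.arccos (1 / (2 * Real.sqrt (1 + s^2))) with hφdef
  have hsq1 : 1 ≤ Real.sqrt (1 + s^2) := by
    nlinarith [Real.sq_sqrt (show (0:ℝ) ≤ 1 + s^2 by positivity), Real.sqrt_nonneg (1 + s^2)]
  have hφIoo : φ ∈ Set.Ioo (0:ℝ) (Real.pi/2) := by
    constructor
    · apply Real.arccos_pos.mpr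
      rw [div_lt_one (by positivity)]
      linarith
    · exact Real.arccos_lt_pi_div_two.mpr (by positivity)
  have hε : (0:ℝ) < (c-1)/2 := by linarith
  obtain ⟨R, hR⟩ := hsec φ hφIoo ((c-1)/2) hε
  set M : ℝ := max R 0 + w.re + |w.im| + 4*|w.im|/(c-1) + 1 with hMdef
  clear_value M
  have h4wim : (0:ℝ) ≤ 4*|w.im|/(c-1) := by positivity
  have hwim : (0:ℝ) ≤ |w.im| := abs_nonneg _
  have hMR : R < M := by
    have : R ≤ max R 0 := le_max_left _ _
    linarith
  have hM0 : 0 < M := by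
    have : (0:ℝ) ≤ max R 0 := le_max_right _ _
    linarith
  have hM4 : 4*|w.im| ≤ M * (c-1) := by
    have hle : 4*|w.im|/(c-1) ≤ M := by
      have : (0:ℝ) ≤ max R 0 := le_max_right _ _
      linarith
    calc 4*|w.im| = (4*|w.im|/(c-1)) * (c-1) := by field_simp
      _ ≤ M * (c-1) := mul_le_mul_of_nonneg_right hle hc1.le
  obtain ⟨N₁, hN₁⟩ := hesc {z} (Set.singleton_subset_iff.mpr hz) isCompact_singleton M
  have hN₁' : ∀ n ≥ N₁, M < ‖ζ n‖ := fun n hn => hN₁ n hn z rfl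
  have hcpow : Tendsto (fun n : ℕ => c^n) atTop atTop :=
    tendsto_pow_atTop_atTop_of_one_lt hc
  obtain ⟨N₂, hN₂⟩ := Filter.eventually_atTop.mp (hcpow.eventually_ge_atTop (|z.im|/z.re))
  have hgrow : ∀ n, c^n * z.re ≤ (ζ n).re := by
    intro n
    induction n with
    | zero =>
      simp only [pow_zero, one_mul]
      exact le_of_eq rfl
    | succ n ih =>
      have h' : c^(n+1) * z.re = c * (c^n * z.re) := by ring
      rw [h']
      calc c * (c^n * z.re) ≤ c * (ζ n).re :=
            mul_le_mul_of_nonneg_left ih (by linarith)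
        _ ≤ (ζ (n+1)).re := hstep_re n
  have hre_big : ∀ n ≥ N₂, |z.im| ≤ (ζ n).re := by
    intro n hn
    have h := hN₂ n hn
    have h' : |z.im| ≤ c^n * z.re := (div_le_iff₀ hz).mp h
    linarith [hgrow n]
  set N : ℕ := max N₁ N₂ with hNdef
  -- growth of modulus
  have hgrowth : ∀ n ≥ N, ((c+1)/2) * ‖ζ n‖ ≤ ‖ζ (n+1)‖ := by
    intro n hn
    have hn1 : N₁ ≤ n := le_trans (le_max_left _ _) hn
    have hn2 : N₂ ≤ n := le_trans (le_max_right _ _) hn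
    have habs := hN₁' n hn1
    have harg : |(ζ n).arg| < φ := by
      apply arg_lt_arccos (hRe n) hs0
      have ha1 := him n
      have ha2 := hre_big n hn2
      have ha3 : |(ζ n).im| ≤ |(ζ n).im - z.im| + |z.im| := by
        calc |(ζ n).im| = |((ζ n).im - z.im) + z.im| := by ring_nf
          _ ≤ |(ζ n).im - z.im| + |z.im| := abs_add_le _ _
      calc |(ζ n).im| ≤ B*(ζ n).re + (ζ n).re := by linarith
        _ = s * (ζ n).re := by rw [hsdef]; ring
    have hfar : R < ‖ζ n‖ := lt_trans hMR habs
    have hclose := hR (ζ n) (hRe n) harg hfar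
    have hζn0 : ζ n ≠ 0 := by
      intro h0
      rw [h0] at habs
      simp at habs
      linarith
    have habsX : (c+1)/2 ≤ ‖f (ζ n) / ζ n‖ := by
      have htri := abs_norm_sub_norm_le (f (ζ n) / ζ n) ((c:ℝ):ℂ)
      have hcc : ‖((c:ℝ):ℂ)‖ = c := by
        rw [Complex.norm_real, Real.norm_eq_abs, _root_.abs_of_pos (by linarith)]
      rw [hcc] at htri
      have h9 := abs_le.mp (le_trans htri hclose.le)
      linarith [h9.1]
    have habs0' : ‖ζ n‖ ≠ 0 := fun h => hζn0 (norm_eq_zero.mp h)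
    have heq : ‖ζ (n+1)‖ = ‖f (ζ n) / ζ n‖ * ‖ζ n‖ := by
      rw [hζsucc n, norm_div, div_mul_cancel₀ _ habs0']
    rw [heq]
    apply mul_le_mul_of_nonneg_right habsX (norm_nonneg _)
  -- the radial quantity r n
  have hiv : ‖(w.im:ℂ)*Complex.I‖ = |w.im| := by simp
  have rlow : ∀ n, ‖ζ n‖ - |w.im| ≤ ‖ζ n - (w.im:ℂ)*Complex.I‖ := by
    intro n
    have : ‖ζ n‖ ≤ ‖ζ n - (w.im:ℂ)*Complex.I‖ + |w.im| := by
      calc ‖ζ n‖ = ‖(ζ n - (w.im:ℂ)*Complex.I) + (w.im:ℂ)*Complex.I‖ := by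
            congr 1; ring
        _ ≤ ‖ζ n - (w.im:ℂ)*Complex.I‖ + ‖(w.im:ℂ)*Complex.I‖ :=
            norm_add_le _ _
        _ = ‖ζ n - (w.im:ℂ)*Complex.I‖ + |w.im| := by rw [hiv]
    linarith
  have rhigh : ∀ n, ‖ζ n - (w.im:ℂ)*Complex.I‖ ≤ ‖ζ n‖ + |w.im| := by
    intro n
    calc ‖ζ n - (w.im:ℂ)*Complex.I‖
        = ‖ζ n + (-((w.im:ℂ)*Complex.I))‖ := by rw [sub_eq_add_neg]
      _ ≤ ‖ζ n‖ + ‖-((w.im:ℂ)*Complex.I)‖ := norm_add_le _ _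
      _ = ‖ζ n‖ + |w.im| := by rw [norm_neg, hiv]
  have hkey : ∀ n ≥ N, w.re < ‖ζ n - (w.im:ℂ)*Complex.I‖ := by
    intro n hn
    have hn1 : N₁ ≤ n := le_trans (le_max_left _ _) hn
    have habs := hN₁' n hn1
    have hmax : max R 0 ≥ (0:ℝ) := le_max_right _ _
    linarith [rlow n]
  have hkey2 : ∀ n ≥ N, ‖ζ n - (w.im:ℂ)*Complex.I‖ <
      ‖ζ (n+1) - (w.im:ℂ)*Complex.I‖ := by
    intro n hn
    have hn1 : N₁ ≤ n := le_trans (le_max_left _ _) hn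
    have habs := hN₁' n hn1
    have hg := hgrowth n hn
    have hprod : M * (c-1) < ‖ζ n‖ * (c-1) :=
      mul_lt_mul_of_pos_right habs hc1
    have h5 := rlow (n+1)
    have h6 := rhigh n
    nlinarith [hprod, hM4, hg, h5, h6]
  -- conclusion
  refine ⟨N, fun n hn => ?_⟩
  have hn' : N ≤ n + 1 := le_trans hn (Nat.le_succ n)
  have hr1 := hkey n hn
  have hr2 := hkey (n+1) hn'
  have hr12 := hkey2 n hn
  have hv1 := proj_val hw (hRe n) hr1 (hp n)
  have hv2 := proj_val hw (hRe (n+1)) hr2 (hp (n+1))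
  rw [hv1, hv2]
  have hd1 : 0 < ‖ζ n - (w.im:ℂ)*Complex.I‖ / w.re :=
    div_pos (lt_trans hw hr1) hw
  have hd2 : ‖ζ n - (w.im:ℂ)*Complex.I‖ / w.re <
      ‖ζ (n+1) - (w.im:ℂ)*Complex.I‖ / w.re := by
    gcongr
  have hlog := Real.log_lt_log hd1 hd2
  linarith
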